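/- If q = 0 (lossless sidelinks), a strategy profile is optimal if and only if the numbers of users choosing each source are balanced: |y_i - y_j| ≤ 1 for all i,j ∈ [m], where y_i = u_i + v_i. -/

import Mathlib

open Finset

lemma secant_le (φ μ : ℝ) (hφ : 0 < φ) (hμ : 0 < μ) (a k : ℕ) :
    μ/((a:ℝ)*φ+μ) + ((k:ℝ) - (a:ℝ)) * (μ/(((a:ℝ)+1)*φ+μ) - μ/((a:ℝ)*φ+μ))
      ≤ μ/((k:ℝ)*φ+μ) := by
  have hA : 0 < (k:ℝ)*φ+μ := by positivity
  have hB : 0 < (a:ℝ)*φ+μ := by positivity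
  have hC : 0 < ((a:ℝ)+1)*φ+μ := by positivity
  have key : (0:ℝ) ≤ ((k:ℝ)-(a:ℝ)) * (((k:ℝ)-(a:ℝ)) - 1) := by
    have h : (0:ℤ) ≤ ((k:ℤ)-(a:ℤ)) * (((k:ℤ)-(a:ℤ)) - 1) := by
      rcases le_or_gt (a:ℤ) (k:ℤ) with h | h
      · rcases eq_or_lt_of_le h with h | h
        · simp [← h]
        · nlinarith
      · nlinarith
    exact_mod_cast h
  have expand : μ/((k:ℝ)*φ+μ) - (μ/((a:ℝ)*φ+μ) + ((k:ℝ)-(a:ℝ)) * (μ/(((a:ℝ)+1)*φ+μ) - μ/((a:ℝ)*φ+μ)))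
      = μ*φ^2*(((k:ℝ)-(a:ℝ))*(((k:ℝ)-(a:ℝ))-1)) / (((k:ℝ)*φ+μ)*((a:ℝ)*φ+μ)*(((a:ℝ)+1)*φ+μ)) := by
    field_simp
    ring
  have hpos : 0 ≤ μ*φ^2*(((k:ℝ)-(a:ℝ))*(((k:ℝ)-(a:ℝ))-1)) / (((k:ℝ)*φ+μ)*((a:ℝ)*φ+μ)*(((a:ℝ)+1)*φ+μ)) := by
    apply div_nonneg
    · positivity
    · positivity
  linarith

lemma exch_lt (φ μ : ℝ) (hφ : 0 < φ) (hμ : 0 < μ) (b c : ℕ) (h : b < c) :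
    μ/((c:ℝ)*φ+μ) + μ/(((b:ℝ)+1)*φ+μ) < μ/(((c:ℝ)+1)*φ+μ) + μ/((b:ℝ)*φ+μ) := by
  have hB : 0 < (b:ℝ)*φ+μ := by positivity
  have hB' : 0 < ((b:ℝ)+1)*φ+μ := by positivity
  have hC : 0 < (c:ℝ)*φ+μ := by positivity
  have hC' : 0 < ((c:ℝ)+1)*φ+μ := by positivity
  have e1 : μ/((b:ℝ)*φ+μ) - μ/(((b:ℝ)+1)*φ+μ) = μ*φ/(((b:ℝ)*φ+μ)*(((b:ℝ)+1)*φ+μ)) := by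
    field_simp; ring
  have e2 : μ/((c:ℝ)*φ+μ) - μ/(((c:ℝ)+1)*φ+μ) = μ*φ/(((c:ℝ)*φ+μ)*(((c:ℝ)+1)*φ+μ)) := by
    field_simp; ring
  have hbc : (b:ℝ) < (c:ℝ) := by exact_mod_cast h
  have h1 : 0 < ((c:ℝ)-(b:ℝ))*φ := mul_pos (sub_pos.mpr hbc) hφ
  have h2 : 0 < ((c:ℝ)+(b:ℝ)+1)*φ + 2*μ := by positivity
  have hlt : ((b:ℝ)*φ+μ)*(((b:ℝ)+1)*φ+μ) < ((c:ℝ)*φ+μ)*(((c:ℝ)+1)*φ+μ) := by nlinarith [mul_pos h1 h2]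
  have := div_lt_div_of_pos_left (by positivity : (0:ℝ) < μ*φ) (by positivity) hlt
  linarith

/-- If `q = 0` (lossless sidelinks), a distribution `y` of the `N` users over the
`m` sources (with `y i` users routing through source `i`) maximizes the total
traffic `μ(m - Σ_i μ/(y_i φ + μ))` if and only if it is balanced:
`|y i - y j| ≤ 1` for all `i, j`. -/
theorem opt_q_zero_balanced (m N : ℕ) (φ μ : ℝ) (hφ : 0 < φ) (hμ : 0 < μ)
    (y : Fin m → ℕ) (hy : ∑ i, y i = N) :
    (∀ y' : Fin m → ℕ, ∑ i, y' i = N →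
        μ * ((m : ℝ) - ∑ i, μ / ((y' i : ℝ) * φ + μ)) ≤
          μ * ((m : ℝ) - ∑ i, μ / ((y i : ℝ) * φ + μ))) ↔
      (∀ i j : Fin m, |(y i : ℤ) - (y j : ℤ)| ≤ 1) := by
  constructor
  · -- optimal → balanced
    intro hopt
    have key : ∀ i j : Fin m, y j + 2 ≤ y i → False := by
      intro i j hij2
      have hij : i ≠ j := by
        intro h; rw [h] at hij2; omega
      set y' : Fin m → ℕ := Function.update (Function.update y i (y i - 1)) j (y j + 1) with hy'def
      have hy'i : y' i = y i - 1 := by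
        rw [hy'def, Function.update_of_ne hij, Function.update_self]
      have hy'j : y' j = y j + 1 := by
        rw [hy'def, Function.update_self]
      have hy'k : ∀ k, k ≠ i → k ≠ j → y' k = y k := by
        intro k hki hkj
        rw [hy'def, Function.update_of_ne hkj, Function.update_of_ne hki]
      have hjmem : j ∈ (univ : Finset (Fin m)).erase i :=
        Finset.mem_erase.mpr ⟨hij.symm, mem_univ j⟩
      have split : ∀ {M : Type} [AddCommMonoid M] (g : Fin m → M),
          ∑ k, g k = g i + g j + ∑ k ∈ ((univ : Finset (Fin m)).erase i).erase j, g k := by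
        intro M _ g
        rw [← Finset.sum_erase_add univ g (mem_univ i),
            ← Finset.sum_erase_add ((univ : Finset (Fin m)).erase i) g hjmem]
        abel
      have hrest : ∀ {M : Type} [AddCommMonoid M] (f : ℕ → M),
          ∑ k ∈ ((univ : Finset (Fin m)).erase i).erase j, f (y' k)
            = ∑ k ∈ ((univ : Finset (Fin m)).erase i).erase j, f (y k) := by
        intro M _ f
        apply Finset.sum_congr rfl
        intro k hk
        rw [Finset.mem_erase, Finset.mem_erase] at hk
        rw [hy'k k hk.2.1 hk.1]
      have hrestN : ∑ k ∈ ((univ : Finset (Fin m)).erase i).erase j, y' k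
          = ∑ k ∈ ((univ : Finset (Fin m)).erase i).erase j, y k := by
        apply Finset.sum_congr rfl
        intro k hk
        rw [Finset.mem_erase, Finset.mem_erase] at hk
        rw [hy'k k hk.2.1 hk.1]
      have hsum' : ∑ k, y' k = N := by
        rw [split y', hrestN, hy'i, hy'j, ← hy, split y]
        omega
      have hle := hopt y' hsum'
      -- hle : μ*(m - S') ≤ μ*(m - S), i.e. S ≤ S'
      have hS : ∑ k, μ / ((y k : ℝ) * φ + μ) ≤ ∑ k, μ / ((y' k : ℝ) * φ + μ) := by
        have := (mul_le_mul_iff_right₀ hμ).mp hle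
        linarith
      -- but strict exchange inequality gives S' < S
      have hc : y j < y i - 1 := by omega
      have hcast : ((y i - 1 : ℕ) : ℝ) = (y i : ℝ) - 1 := by
        have h1 : 1 ≤ y i := by omega
        push_cast [h1]; ring
      have hlt := exch_lt φ μ hφ hμ (y j) (y i - 1) hc
      have hci : ((y i - 1 : ℕ) : ℝ) + 1 = (y i : ℝ) := by rw [hcast]; ring
      have hstrict : ∑ k, μ / ((y' k : ℝ) * φ + μ) < ∑ k, μ / ((y k : ℝ) * φ + μ) := by
        rw [split (fun k => μ / ((y' k : ℝ) * φ + μ)),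
            split (fun k => μ / ((y k : ℝ) * φ + μ)),
            hrest (fun n : ℕ => μ / ((n : ℝ) * φ + μ)), hy'i, hy'j]
        have : μ / (((y i - 1 : ℕ) : ℝ) * φ + μ) + μ / (((y j + 1 : ℕ) : ℝ) * φ + μ)
            < μ / ((y i : ℝ) * φ + μ) + μ / ((y j : ℝ) * φ + μ) := by
          rw [hcast]
          push_cast
          rw [show ((y i : ℝ) - 1) * φ + μ = ((y i - 1 : ℕ) : ℝ) * φ + μ by rw [hcast]]
          rw [show (y i : ℝ) * φ + μ = (((y i - 1 : ℕ) : ℝ) + 1) * φ + μ by rw [hci]]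
          convert hlt using 3
        linarith
      linarith
    intro i j
    by_contra h
    rw [abs_le] at h
    push_neg at h
    have h2 : y j + 2 ≤ y i ∨ y i + 2 ≤ y j := by omega
    rcases h2 with h2 | h2
    · exact key i j h2
    · exact key j i h2
  · -- balanced → optimal
    intro hbal y' hy'
    rcases Nat.eq_zero_or_pos m with hm | hm
    · subst hm
      simp
    have hne : (univ : Finset (Fin m)).Nonempty := ⟨⟨0, hm⟩, mem_univ _⟩
    obtain ⟨i0, -, hmin⟩ := Finset.exists_min_image univ y hne
    set a := y i0 with ha
    set d := μ/(((a:ℝ)+1)*φ+μ) - μ/((a:ℝ)*φ+μ) with hd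
    have hcase : ∀ k, y k = a ∨ y k = a + 1 := by
      intro k
      have h1 : a ≤ y k := hmin k (mem_univ k)
      have h2 := hbal k i0
      rw [abs_le] at h2
      omega
    have heq : ∀ k : Fin m, μ / ((y k : ℝ) * φ + μ) = μ/((a:ℝ)*φ+μ) + ((y k : ℝ) - (a:ℝ)) * d := by
      intro k
      rcases hcase k with h | h
      · rw [h]; ring
      · rw [h, hd]; push_cast; ring
    have hle : ∀ k : Fin m, μ/((a:ℝ)*φ+μ) + ((y' k : ℝ) - (a:ℝ)) * d ≤ μ / ((y' k : ℝ) * φ + μ) := by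
      intro k
      exact secant_le φ μ hφ hμ a (y' k)
    have hsumcast : ∑ k, ((y k : ℝ)) = ∑ k, ((y' k : ℝ)) := by
      have h := hy.trans hy'.symm
      exact_mod_cast congrArg (fun n : ℕ => (n : ℝ)) h
    have hlin : ∑ k, (μ/((a:ℝ)*φ+μ) + ((y k : ℝ) - (a:ℝ)) * d)
        = ∑ k, (μ/((a:ℝ)*φ+μ) + ((y' k : ℝ) - (a:ℝ)) * d) := by
      have hz : ∑ k, (μ/((a:ℝ)*φ+μ) + ((y k : ℝ) - (a:ℝ)) * d)
          - ∑ k, (μ/((a:ℝ)*φ+μ) + ((y' k : ℝ) - (a:ℝ)) * d)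
          = (∑ k, ((y k : ℝ)) - ∑ k, ((y' k : ℝ))) * d := by
        rw [← Finset.sum_sub_distrib, ← Finset.sum_sub_distrib, Finset.sum_mul]
        apply Finset.sum_congr rfl
        intro k _
        ring
      rw [hsumcast] at hz
      simp at hz
      linarith
    have hS : ∑ k, μ / ((y k : ℝ) * φ + μ) ≤ ∑ k, μ / ((y' k : ℝ) * φ + μ) :=
      calc ∑ k, μ / ((y k : ℝ) * φ + μ)
          = ∑ k, (μ/((a:ℝ)*φ+μ) + ((y k : ℝ) - (a:ℝ)) * d) := Finset.sum_congr rfl (fun k _ => heq k)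
        _ = ∑ k, (μ/((a:ℝ)*φ+μ) + ((y' k : ℝ) - (a:ℝ)) * d) := hlin
        _ ≤ ∑ k, μ / ((y' k : ℝ) * φ + μ) := Finset.sum_le_sum (fun k _ => hle k)
    have := mul_le_mul_of_nonneg_left (sub_le_sub_left hS ((m:ℝ))) hμ.le
    linarith
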